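/- Fix an integer c ≥ 2 and let G be a finite double tree with no c-balanced double tree decomposition that has the minimum number of vertices among all such double trees. If a vertex v of G is adjacent to ℓ ≥ 1 bad 3-vertices via their double edges, then d_G(v) ≥ 2ℓ + c + 1. -/

import Mathlib

/-- A multigraph without loops: edges `E` with an endpoint map into unordered
pairs of vertices, no edge being a loop. -/
structure Multigraph (V : Type*) (E : Type*) where
  ends : E → Sym2 V
  loopless : ∀ e, ¬ (ends e).IsDiag

namespace Multigraph

variable {V E : Type*}

/-- `a` and `b` are joined by an edge belonging to the edge set `S`. -/
def Adj (G : Multigraph V E) (S : Set E) (a b : V) : Prop :=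
  ∃ e ∈ S, G.ends e = s(a, b)

/-- Reachability in the spanning subgraph with edge set `S`. -/
def Reachable (G : Multigraph V E) (S : Set E) (a b : V) : Prop :=
  Relation.ReflTransGen (G.Adj S) a b

/-- The spanning subgraph with edge set `S` is connected. -/
def Connected (G : Multigraph V E) (S : Set E) : Prop :=
  ∀ a b : V, G.Reachable S a b

/-- The spanning subgraph with edge set `S` is acyclic: every edge of `S`
is a bridge of `S`. -/
def Acyclic (G : Multigraph V E) (S : Set E) : Prop :=
  ∀ e ∈ S, ∀ a b : V, G.ends e = s(a, b) → ¬ G.Reachable (S \ {e}) a b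

/-- `S` is the edge set of a spanning tree: connected and acyclic. -/
def IsSpanningTree (G : Multigraph V E) (S : Set E) : Prop :=
  G.Connected S ∧ G.Acyclic S

/-- The edges of `S` incident to `v`. -/
def incEdges (G : Multigraph V E) (S : Set E) (v : V) : Set E :=
  {e ∈ S | v ∈ G.ends e}

/-- The degree of `v` in the spanning subgraph with edge set `S`. -/
noncomputable def deg (G : Multigraph V E) (S : Set E) (v : V) : ℕ :=
  (G.incEdges S v).ncard

/-- `T1, T2` form a double tree decomposition of `G`: they partition the
edges of `G` and are both spanning trees. -/
def IsDTD (G : Multigraph V E) (T1 T2 : Set E) : Prop :=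
  T1 ∪ T2 = Set.univ ∧ Disjoint T1 T2 ∧ G.IsSpanningTree T1 ∧ G.IsSpanningTree T2

/-- `G` is a double tree: the edge-disjoint union of two spanning trees. -/
def IsDoubleTree (G : Multigraph V E) : Prop :=
  ∃ T1 T2, G.IsDTD T1 T2

/-- A decomposition into two spanning subgraphs is `c`-balanced if at each
vertex the two degrees differ by at most `c`. -/
def Balanced (G : Multigraph V E) (c : ℕ) (S1 S2 : Set E) : Prop :=
  ∀ v : V, |(G.deg S1 v : ℤ) - (G.deg S2 v : ℤ)| ≤ (c : ℤ)

end Multigraph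

namespace Multigraph

variable {V E : Type*}

/-- `G` admits no `c`-balanced double tree decomposition. -/
def NoBalancedDTD (c : ℕ) (G : Multigraph V E) : Prop :=
  ¬ ∃ T1 T2 : Set E, G.IsDTD T1 T2 ∧ G.Balanced c T1 T2

/-- `v` is big: its degree exceeds `c + 2`. -/
def Big (G : Multigraph V E) (c : ℕ) (v : V) : Prop :=
  c + 2 < G.deg Set.univ v

/-- `v` is small: its degree is at most `c + 2`. -/
def Small (G : Multigraph V E) (c : ℕ) (v : V) : Prop :=
  G.deg Set.univ v ≤ c + 2

/-- `u` and `z` are joined by a double edge. -/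
def DoubleEdge (G : Multigraph V E) (u z : V) : Prop :=
  ∃ e1 e2 : E, e1 ≠ e2 ∧ G.ends e1 = s(u, z) ∧ G.ends e2 = s(u, z)

/-- `u` is a bad 3-vertex: it has degree 3, a small neighbour, and is joined
to a big vertex by a double edge. -/
def Bad3 (G : Multigraph V E) (c : ℕ) (u : V) : Prop :=
  G.deg Set.univ u = 3 ∧
  (∃ w, G.Adj Set.univ u w ∧ G.Small c w) ∧
  (∃ z, G.DoubleEdge u z ∧ G.Big c z)

/-- `u` is a poor 3-vertex: it has degree 3 and three distinct neighbours,
two big and one small. -/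
def Poor3 (G : Multigraph V E) (c : ℕ) (u : V) : Prop :=
  G.deg Set.univ u = 3 ∧
  ∃ x y s : V, x ≠ y ∧ x ≠ s ∧ y ≠ s ∧
    G.Adj Set.univ u x ∧ G.Adj Set.univ u y ∧ G.Adj Set.univ u s ∧
    G.Big c x ∧ G.Big c y ∧ G.Small c s

end Multigraph

namespace Multigraph

variable {G : Multigraph V E} {S S' : Set E} {a b : V} {e e1 e2 : E}

lemma adj_symm (h : G.Adj S a b) : G.Adj S b a := by
  obtain ⟨e, he, h⟩ := h
  exact ⟨e, he, h.trans (Sym2.eq_swap)⟩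

lemma reach_symm (h : G.Reachable S a b) : G.Reachable S b a :=
  by haveI : Std.Symm (G.Adj S) := ⟨fun _ _ => adj_symm⟩; exact Std.Symm.symm (r := Relation.ReflTransGen (G.Adj S)) _ _ h

lemma reach_trans {c : V} (h : G.Reachable S a b) (h' : G.Reachable S b c) :
    G.Reachable S a c := h.trans h'

lemma reach_single (he : e ∈ S) (h : G.ends e = s(a, b)) : G.Reachable S a b :=
  Relation.ReflTransGen.single ⟨e, he, h⟩

lemma adj_mono (hS : S ⊆ S') (h : G.Adj S a b) : G.Adj S' a b := by
  obtain ⟨e, he, h⟩ := h; exact ⟨e, hS he, h⟩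

lemma reach_mono (hS : S ⊆ S') (h : G.Reachable S a b) : G.Reachable S' a b :=
  Relation.ReflTransGen.mono (fun _ _ => adj_mono hS) _ _ h

/-- Generic walk projection. -/
lemma reach_map {V₂ E₂ : Type*} {H : Multigraph V₂ E₂} {S₂ : Set E₂} (ρ : V → V₂)
    (hstep : ∀ x y, G.Adj S x y → H.Reachable S₂ (ρ x) (ρ y))
    (h : G.Reachable S a b) : H.Reachable S₂ (ρ a) (ρ b) :=
  Relation.ReflTransGen.lift' ρ hstep _ _ h

lemma eq_of_reach_no_inc (h : G.Reachable S a b) (ha : ∀ e ∈ S, a ∉ G.ends e) :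
    a = b := by
  rcases (Relation.ReflTransGen.cases_head h) with rfl | ⟨c, ⟨e, he, hc⟩, _⟩
  · rfl
  · exact absurd (hc ▸ Sym2.mem_mk_left a c) (ha e he)

lemma ends_eq_of_mem {x y : V} (hne : x ≠ y) (hx : x ∈ G.ends e) (hy : y ∈ G.ends e) :
    G.ends e = s(x, y) := (Sym2.mem_and_mem_iff hne).mp ⟨hx, hy⟩

lemma exists_ends (G : Multigraph V E) (e : E) {x : V} (hx : x ∈ G.ends e) :
    ∃ y, G.ends e = s(x, y) ∧ x ≠ y := by
  obtain ⟨y, hy⟩ := Sym2.mem_iff_exists.mp hx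
  refine ⟨y, hy, fun h => G.loopless e ?_⟩
  rw [hy, ← h]; exact Sym2.mk_isDiag_iff.mpr rfl

lemma ne_of_ends (h : G.ends e = s(a, b)) : a ≠ b := by
  intro hab; exact G.loopless e (by rw [h, hab]; exact Sym2.mk_isDiag_iff.mpr rfl)

lemma not_parallel (hT : G.Acyclic S) (h1 : e1 ∈ S) (h2 : e2 ∈ S) (hne : e1 ≠ e2)
    (he : G.ends e1 = G.ends e2) : False := by
  obtain ⟨x, hval⟩ := Sym2.mem_iff_exists.mp (Sym2.out_fst_mem (G.ends e1))
  exact hT e1 h1 _ _ hval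
    (reach_single (e := e2) ⟨h2, fun h => hne (by simpa using h.symm)⟩ (he ▸ hval))


section Iso

variable {V₂ E₂ : Type*} {H : Multigraph V₂ E₂} (σ : V ≃ V₂) (τ : E ≃ E₂)

lemma iso_inv_compat (hc : ∀ e, H.ends (τ e) = (G.ends e).map σ) :
    ∀ e, G.ends (τ.symm e) = (H.ends e).map σ.symm := by
  intro e
  have := hc (τ.symm e)
  rw [τ.apply_symm_apply] at this
  rw [this, Sym2.map_map]
  simp

lemma iso_adj (hc : ∀ e, H.ends (τ e) = (G.ends e).map σ) {S : Set E} {a b : V} (h : G.Adj S a b) :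
    H.Adj (τ '' S) (σ a) (σ b) := by
  obtain ⟨e, he, hends⟩ := h
  exact ⟨τ e, Set.mem_image_of_mem _ he, by rw [hc e, hends, Sym2.map_pair_eq]⟩

lemma iso_reach (hc : ∀ e, H.ends (τ e) = (G.ends e).map σ) {S : Set E} {a b : V} (h : G.Reachable S a b) :
    H.Reachable (τ '' S) (σ a) (σ b) :=
  reach_map σ (fun _ _ hab => Relation.ReflTransGen.single (iso_adj σ τ hc hab)) h

lemma iso_connected (hc : ∀ e, H.ends (τ e) = (G.ends e).map σ) {S : Set E} (h : G.Connected S) : H.Connected (τ '' S) := by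
  intro a b
  have := iso_reach σ τ hc (h (σ.symm a) (σ.symm b))
  simpa using this

lemma iso_acyclic (hc : ∀ e, H.ends (τ e) = (G.ends e).map σ) {S : Set E} (h : G.Acyclic S) : H.Acyclic (τ '' S) := by
  rintro e2 ⟨e, he, rfl⟩ a b hab hreach
  have hends : G.ends e = s(σ.symm a, σ.symm b) := by
    have := hc e
    rw [hab] at this
    have := congrArg (Sym2.map σ.symm) this
    rw [Sym2.map_map, Sym2.map_pair_eq] at this
    simpa using this.symm
  refine h e he (σ.symm a) (σ.symm b) hends ?_
  have := iso_reach σ.symm τ.symm (iso_inv_compat σ τ hc) hreach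
  simpa [Set.image_diff τ.symm.injective, Set.image_image] using this

lemma iso_spanning (hc : ∀ e, H.ends (τ e) = (G.ends e).map σ) {S : Set E} (h : G.IsSpanningTree S) : H.IsSpanningTree (τ '' S) :=
  ⟨iso_connected σ τ hc h.1, iso_acyclic σ τ hc h.2⟩

lemma iso_incEdges (hc : ∀ e, H.ends (τ e) = (G.ends e).map σ) (S : Set E) (x : V) :
    H.incEdges (τ '' S) (σ x) = τ '' G.incEdges S x := by
  ext e2
  constructor
  · rintro ⟨⟨e, he, rfl⟩, hmem⟩
    refine ⟨e, ⟨he, ?_⟩, rfl⟩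
    rw [hc e] at hmem
    obtain ⟨y, hy, hyx⟩ := Sym2.mem_map.mp hmem
    rwa [σ.injective hyx] at hy
  · rintro ⟨e, ⟨he, hx⟩, rfl⟩
    exact ⟨⟨e, he, rfl⟩, by rw [hc e]; exact Sym2.mem_map.mpr ⟨x, hx, rfl⟩⟩

lemma iso_deg (hc : ∀ e, H.ends (τ e) = (G.ends e).map σ) (S : Set E) (x : V) : H.deg (τ '' S) (σ x) = G.deg S x := by
  rw [deg, iso_incEdges σ τ hc, Set.ncard_image_of_injective _ τ.injective]; rfl

lemma iso_balanced (hc : ∀ e, H.ends (τ e) = (G.ends e).map σ) {c : ℕ} {S1 S2 : Set E} (h : G.Balanced c S1 S2) :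
    H.Balanced c (τ '' S1) (τ '' S2) := by
  intro x
  have := h (σ.symm x)
  rw [← iso_deg σ τ hc S1 (σ.symm x), ← iso_deg σ τ hc S2 (σ.symm x),
    σ.apply_symm_apply] at this
  exact this

lemma iso_dtd (hc : ∀ e, H.ends (τ e) = (G.ends e).map σ) {S1 S2 : Set E} (h : G.IsDTD S1 S2) : H.IsDTD (τ '' S1) (τ '' S2) := by
  obtain ⟨hu, hd, h1, h2⟩ := h
  refine ⟨?_, ?_, iso_spanning σ τ hc h1, iso_spanning σ τ hc h2⟩
  · rw [← Set.image_union, hu, Set.image_univ, Set.range_eq_univ.mpr τ.surjective]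
  · exact (Set.disjoint_image_iff τ.injective).mpr hd

lemma iso_doubleTree (hc : ∀ e, H.ends (τ e) = (G.ends e).map σ) (h : G.IsDoubleTree) : H.IsDoubleTree := by
  obtain ⟨T1, T2, hT⟩ := h
  exact ⟨τ '' T1, τ '' T2, iso_dtd σ τ hc hT⟩

lemma iso_noBalancedDTD (hc : ∀ e, H.ends (τ e) = (G.ends e).map σ) {c : ℕ} (h : NoBalancedDTD c G) : NoBalancedDTD c H := by
  rintro ⟨P1, P2, hdtd, hbal⟩
  have hc' := iso_inv_compat σ τ hc
  refine h ⟨τ.symm '' P1, τ.symm '' P2,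
    iso_dtd σ.symm τ.symm hc' hdtd, iso_balanced σ.symm τ.symm hc' hbal⟩

end Iso

section Reduction

lemma sym2_pair (z : Sym2 V) : ∃ a b, z = s(a, b) := by
  obtain ⟨y, h⟩ := Sym2.mem_iff_exists.mp (Sym2.out_fst_mem z)
  exact ⟨_, _, h⟩

variable (G) in
/-- The structural data of the reduction: `U` is a set of bad 3-vertices, each `u ∈ U`
joined to `v` by the double edge `p1 u, p2 u` and to `wf u` by its third edge `fe u`. -/
structure Setup (U : Set V) (v : V) (p1 p2 fe : V → E) (wf : V → V) : Prop where
  h1 : ∀ u ∈ U, G.ends (p1 u) = s(u, v)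
  h2 : ∀ u ∈ U, G.ends (p2 u) = s(u, v)
  h12 : ∀ u ∈ U, p1 u ≠ p2 u
  hf : ∀ u ∈ U, G.ends (fe u) = s(u, wf u)
  hwU : ∀ u ∈ U, wf u ∉ U
  hwv : ∀ u ∈ U, wf u ≠ v
  hinc : ∀ u ∈ U, ∀ h, u ∈ G.ends h → h = p1 u ∨ h = p2 u ∨ h = fe u
  hvU : v ∉ U

variable {U : Set V} {v : V} {p1 p2 fe : V → E} {wf : V → V}

lemma Setup.uv (st : G.Setup U v p1 p2 fe wf) {u : V} (hu : u ∈ U) : u ≠ v :=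
  ne_of_ends (st.h1 u hu)

lemma Setup.wu (st : G.Setup U v p1 p2 fe wf) {u : V} (hu : u ∈ U) : u ≠ wf u :=
  ne_of_ends (st.hf u hu)

lemma Setup.mem_p1 (st : G.Setup U v p1 p2 fe wf) {u : V} (hu : u ∈ U) :
    u ∈ G.ends (p1 u) := by rw [st.h1 u hu]; exact Sym2.mem_mk_left _ _

lemma Setup.mem_p2 (st : G.Setup U v p1 p2 fe wf) {u : V} (hu : u ∈ U) :
    u ∈ G.ends (p2 u) := by rw [st.h2 u hu]; exact Sym2.mem_mk_left _ _

lemma Setup.mem_fe (st : G.Setup U v p1 p2 fe wf) {u : V} (hu : u ∈ U) :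
    u ∈ G.ends (fe u) := by rw [st.hf u hu]; exact Sym2.mem_mk_left _ _

lemma Setup.wmem_fe (st : G.Setup U v p1 p2 fe wf) {u : V} (hu : u ∈ U) :
    wf u ∈ G.ends (fe u) := by rw [st.hf u hu]; exact Sym2.mem_mk_right _ _

lemma Setup.owner (st : G.Setup U v p1 p2 fe wf) {u u' : V} (hu : u ∈ U) (hu' : u' ∈ U)
    {h : E} (hm : u ∈ G.ends h) (hm' : u' ∈ G.ends h) : u = u' := by
  by_contra hne
  have hends := ends_eq_of_mem hne hm hm'
  rcases st.hinc u hu h hm with rfl | rfl | rfl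
  · rw [st.h1 u hu] at hends
    rcases Sym2.eq_iff.mp hends.symm with ⟨-, rfl⟩ | ⟨rfl, -⟩
    · exact st.hvU hu'
    · exact st.hvU hu
  · rw [st.h2 u hu] at hends
    rcases Sym2.eq_iff.mp hends.symm with ⟨-, rfl⟩ | ⟨rfl, -⟩
    · exact st.hvU hu'
    · exact st.hvU hu
  · rw [st.hf u hu] at hends
    rcases Sym2.eq_iff.mp hends.symm with ⟨-, h2⟩ | ⟨h1, rfl⟩
    · exact st.hwU u hu (h2 ▸ hu')
    · exact hne rfl

lemma Setup.fe_ne_p1 (st : G.Setup U v p1 p2 fe wf) {u : V} (hu : u ∈ U) : fe u ≠ p1 u := by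
  intro h
  have := (st.hf u hu).symm.trans ((congrArg G.ends h).trans (st.h1 u hu))
  rcases Sym2.eq_iff.mp this with ⟨-, h2⟩ | ⟨h1, -⟩
  · exact st.hwv u hu h2
  · exact st.uv hu h1

lemma Setup.fe_ne_p2 (st : G.Setup U v p1 p2 fe wf) {u : V} (hu : u ∈ U) : fe u ≠ p2 u := by
  intro h
  have := (st.hf u hu).symm.trans ((congrArg G.ends h).trans (st.h2 u hu))
  rcases Sym2.eq_iff.mp this with ⟨-, h2⟩ | ⟨h1, -⟩
  · exact st.hwv u hu h2
  · exact st.uv hu h1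

variable (U) in
abbrev dVert : Type _ := {x : V // x ∉ U}

variable (G U) in
abbrev dEdge : Type _ := {h : E // ∀ u ∈ U, u ∉ G.ends h} ⊕ {u : V // u ∈ U}

open scoped Classical in
/-- The reduced multigraph: delete the vertices of `U` together with their edges and,
for each `u ∈ U`, add a new edge joining `wf u` and `v`. -/
noncomputable def Gd (st : G.Setup U v p1 p2 fe wf) : Multigraph (dVert U) (dEdge G U) where
  ends := fun h => Sum.elim
    (fun e => (G.ends e.1).map (fun x => if hx : x ∈ U then ⟨v, st.hvU⟩ else ⟨x, hx⟩))
    (fun u => s(⟨wf u.1, st.hwU u.1 u.2⟩, ⟨v, st.hvU⟩)) h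
  loopless := by
    rintro (e | u) hdiag
    · obtain ⟨a, b, hab⟩ := sym2_pair (G.ends e.1)
      have ha : a ∉ U := fun h => e.2 a h (hab ▸ Sym2.mem_mk_left _ _)
      have hb : b ∉ U := fun h => e.2 b h (hab ▸ Sym2.mem_mk_right _ _)
      simp only [Sum.elim_inl, hab, Sym2.map_pair_eq, Sym2.mk_isDiag_iff] at hdiag
      rw [dif_neg ha, dif_neg hb] at hdiag
      exact ne_of_ends (G := G) hab (congrArg Subtype.val hdiag)
    · simp only [Sum.elim_inr, Sym2.mk_isDiag_iff] at hdiag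
      exact st.hwv u.1 u.2 (congrArg Subtype.val hdiag)

lemma Gd_ends_inl (st : G.Setup U v p1 p2 fe wf) (e : {h : E // ∀ u ∈ U, u ∉ G.ends h})
    {a b : V} (hab : G.ends e.1 = s(a, b)) (ha : a ∉ U) (hb : b ∉ U) :
    (Gd st).ends (Sum.inl e) = s(⟨a, ha⟩, ⟨b, hb⟩) := by
  simp only [Gd, Sum.elim_inl, hab, Sym2.map_pair_eq]
  rw [dif_neg ha, dif_neg hb]

lemma Gd_ends_inr (st : G.Setup U v p1 p2 fe wf) (u : {u : V // u ∈ U}) :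
    (Gd st).ends (Sum.inr u) = s(⟨wf u.1, st.hwU u.1 u.2⟩, ⟨v, st.hvU⟩) := by
  simp only [Gd, Sum.elim_inr]

lemma Gd_ends_inl_inv (st : G.Setup U v p1 p2 fe wf) (e : {h : E // ∀ u ∈ U, u ∉ G.ends h})
    {a b : dVert U} (hab : (Gd st).ends (Sum.inl e) = s(a, b)) :
    G.ends e.1 = s(a.1, b.1) := by
  obtain ⟨x, y, hxy⟩ := sym2_pair (G.ends e.1)
  have hx : x ∉ U := fun h => e.2 x h (hxy ▸ Sym2.mem_mk_left _ _)
  have hy : y ∉ U := fun h => e.2 y h (hxy ▸ Sym2.mem_mk_right _ _)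
  rw [Gd_ends_inl st e hxy hx hy] at hab
  rcases Sym2.eq_iff.mp hab with ⟨h1, h2⟩ | ⟨h1, h2⟩
  · rw [hxy, ← h1, ← h2]
  · rw [hxy, ← h1, ← h2, Sym2.eq_swap]

variable (G fe) in
def down (T : Set E) : Set (dEdge G U) :=
  {h | Sum.elim (fun e : {h : E // ∀ u ∈ U, u ∉ G.ends h} => e.1 ∈ T)
    (fun u : {u : V // u ∈ U} => fe u.1 ∈ T) h}

@[simp] lemma down_inl {T : Set E} (e : {h : E // ∀ u ∈ U, u ∉ G.ends h}) :
    Sum.inl e ∈ down G fe (U := U) T ↔ e.1 ∈ T := Iff.rfl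

@[simp] lemma down_inr {T : Set E} (u : {u : V // u ∈ U}) :
    Sum.inr u ∈ down G fe (U := U) T ↔ fe u.1 ∈ T := Iff.rfl

open scoped Classical in
noncomputable def rhoD (st : G.Setup U v p1 p2 fe wf) (T : Set E) : V → dVert U :=
  fun x => if hx : x ∈ U then
    (if fe x ∈ T then ⟨wf x, st.hwU x hx⟩ else ⟨v, st.hvU⟩) else ⟨x, hx⟩

lemma rhoD_not (st : G.Setup U v p1 p2 fe wf) (T : Set E) {x : V} (hx : x ∉ U) :
    rhoD st T x = ⟨x, hx⟩ := dif_neg hx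

lemma rhoD_pos (st : G.Setup U v p1 p2 fe wf) (T : Set E) {x : V} (hx : x ∈ U)
    (hfe : fe x ∈ T) : rhoD st T x = ⟨wf x, st.hwU x hx⟩ := by
  simp only [rhoD]; rw [dif_pos hx, if_pos hfe]

lemma rhoD_neg (st : G.Setup U v p1 p2 fe wf) (T : Set E) {x : V} (hx : x ∈ U)
    (hfe : fe x ∉ T) : rhoD st T x = ⟨v, st.hvU⟩ := by
  simp only [rhoD]; rw [dif_pos hx, if_neg hfe]

lemma tree_down (st : G.Setup U v p1 p2 fe wf) (T : Set E) (hT : G.IsSpanningTree T)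
    (ε : V → E) (hε1 : ∀ u ∈ U, ε u ∈ T) (hε2 : ∀ u ∈ U, G.ends (ε u) = s(u, v))
    (hT3 : ∀ u ∈ U, ∀ h ∈ T, u ∈ G.ends h → h = ε u ∨ h = fe u) :
    (Gd st).IsSpanningTree (down G fe T) := by
  classical
  have hεf : ∀ u ∈ U, ε u ≠ fe u := by
    intro u hu hq
    have : s(u, v) = s(u, wf u) := by rw [← hε2 u hu, hq, st.hf u hu]
    rcases Sym2.eq_iff.mp this with ⟨-, h2⟩ | ⟨h1, -⟩
    · exact st.hwv u hu h2.symm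
    · exact st.wu hu h1
  have hεmem : ∀ u ∈ U, u ∈ G.ends (ε u) := by
    intro u hu; rw [hε2 u hu]; exact Sym2.mem_mk_left _ _
  -- single Adj steps project to reachability
  have hstep1 : ∀ x y, x ∈ U → G.Adj T x y →
      (Gd st).Reachable (down G fe T) (rhoD st T x) (rhoD st T y) := by
    rintro x y hx ⟨h, hhT, hends⟩
    have hy : y ∉ U := by
      intro hy
      exact ne_of_ends hends (st.owner hx hy (hends ▸ Sym2.mem_mk_left _ _)
        (hends ▸ Sym2.mem_mk_right _ _))
    rcases hT3 x hx h hhT (hends ▸ Sym2.mem_mk_left _ _) with rfl | rfl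
    · have hyv : y = v := by
        have : s(x, v) = s(x, y) := by rw [← hε2 x hx, hends]
        rcases Sym2.eq_iff.mp this with ⟨-, h2⟩ | ⟨h1, -⟩
        · exact h2.symm
        · exact absurd (h1 ▸ hx) hy
      rw [hyv, rhoD_not st T st.hvU]
      by_cases hfT : fe x ∈ T
      · rw [rhoD_pos st T hx hfT]
        exact reach_single (e := Sum.inr ⟨x, hx⟩) ((down_inr _).mpr hfT) (Gd_ends_inr st _)
      · rw [rhoD_neg st T hx hfT]
        exact Relation.ReflTransGen.refl
    · have hyw : y = wf x := by
        have : s(x, wf x) = s(x, y) := by rw [← st.hf x hx, hends]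
        rcases Sym2.eq_iff.mp this with ⟨-, h2⟩ | ⟨h1, -⟩
        · exact h2.symm
        · exact absurd (h1 ▸ hx) hy
      rw [hyw, rhoD_pos st T hx hhT, rhoD_not st T (hyw ▸ hy)]
      exact Relation.ReflTransGen.refl
  have hstep : ∀ x y, G.Adj T x y →
      (Gd st).Reachable (down G fe T) (rhoD st T x) (rhoD st T y) := by
    intro x y hadj
    by_cases hx : x ∈ U
    · exact hstep1 x y hx hadj
    by_cases hy : y ∈ U
    · exact reach_symm (hstep1 y x hy (adj_symm hadj))
    · obtain ⟨h, hhT, hends⟩ := hadj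
      have hp : ∀ u ∈ U, u ∉ G.ends h := by
        intro u hu hmem
        rw [hends] at hmem
        rcases Sym2.mem_iff.mp hmem with rfl | rfl
        · exact hx hu
        · exact hy hu
      rw [rhoD_not st T hx, rhoD_not st T hy]
      exact reach_single (e := Sum.inl ⟨h, hp⟩) ((down_inl _).mpr hhT)
        (Gd_ends_inl st _ hends hx hy)
  constructor
  · -- connected
    intro a b
    have ra := reach_map (rhoD st T) hstep (hT.1 a.1 v)
    have rb := reach_map (rhoD st T) hstep (hT.1 b.1 v)
    rw [rhoD_not st T a.2] at ra
    rw [rhoD_not st T b.2] at rb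
    exact ra.trans (reach_symm rb)
  · -- acyclic
    rintro h' hh' a b hab hreach
    obtain e | u := h'
    · have heT : e.1 ∈ T := hh'
      have hends := Gd_ends_inl_inv st e hab
      have hproj : ∀ x y : dVert U, (Gd st).Adj (down G fe T \ {Sum.inl e}) x y →
          G.Reachable (T \ {e.1}) x.1 y.1 := by
        intro x y hadj
        obtain ⟨h'', hmem2, hends''⟩ := hadj
        obtain ⟨hmem, hne⟩ := hmem2
        obtain e₂ | u₂ := h''
        · refine reach_single ⟨hmem, fun hval => ?_⟩ (Gd_ends_inl_inv st e₂ hends'')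
          exact hne (by rw [Subtype.ext (Set.mem_singleton_iff.mp hval)]; rfl)
        · have hu₂ := u₂.2
          have hne_f : fe u₂.1 ≠ e.1 := fun hq => e.2 u₂.1 hu₂ (hq ▸ st.mem_fe hu₂)
          have hne_ε : ε u₂.1 ≠ e.1 := fun hq => e.2 u₂.1 hu₂ (hq ▸ hεmem u₂.1 hu₂)
          have hr : G.Reachable (T \ {e.1}) (wf u₂.1) v :=
            (reach_symm (reach_single (S := T \ {e.1}) ⟨hmem, hne_f⟩ (st.hf u₂.1 hu₂))).trans
              (reach_single (S := T \ {e.1}) ⟨hε1 _ hu₂, hne_ε⟩ (hε2 u₂.1 hu₂))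
          rw [Gd_ends_inr] at hends''
          rcases Sym2.eq_iff.mp hends'' with ⟨rfl, rfl⟩ | ⟨rfl, rfl⟩
          · exact hr
          · exact reach_symm hr
      exact hT.2 e.1 heT a.1 b.1 hends (reach_map Subtype.val hproj hreach)
    · have hfT : fe u.1 ∈ T := hh'
      have hu := u.2
      rw [Gd_ends_inr] at hab
      have hproj : ∀ x y : dVert U, (Gd st).Adj (down G fe T \ {Sum.inr u}) x y →
          G.Reachable (T \ {ε u.1, fe u.1}) x.1 y.1 := by
        intro x y hadj
        obtain ⟨h'', hmem2, hends''⟩ := hadj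
        obtain ⟨hmem, hne⟩ := hmem2
        obtain e₂ | u₂ := h''
        · refine reach_single ⟨hmem, fun hval => ?_⟩ (Gd_ends_inl_inv st e₂ hends'')
          rcases Set.mem_insert_iff.mp hval with hq | hq
          · exact e₂.2 u.1 hu (hq ▸ hεmem u.1 hu)
          · exact e₂.2 u.1 hu ((Set.mem_singleton_iff.mp hq) ▸ st.mem_fe hu)
        · have hu₂ := u₂.2
          have hne_u : u₂.1 ≠ u.1 := by
            intro hq
            exact hne (by rw [Set.mem_singleton_iff, Subtype.ext hq])
          have hnotmem : ∀ h₂ : E, u₂.1 ∈ G.ends h₂ → h₂ ∉ ({ε u.1, fe u.1} : Set E) := by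
            intro h₂ hm hval
            rcases Set.mem_insert_iff.mp hval with hq | hq
            · exact hne_u (st.owner hu₂ hu (hq ▸ hm) (hq ▸ hεmem u.1 hu) )
            · exact hne_u (st.owner hu₂ hu ((Set.mem_singleton_iff.mp hq) ▸ hm)
                ((Set.mem_singleton_iff.mp hq) ▸ st.mem_fe hu))
          have hr : G.Reachable (T \ {ε u.1, fe u.1}) (wf u₂.1) v :=
            (reach_symm (reach_single (S := T \ {ε u.1, fe u.1})
                ⟨hmem, hnotmem _ (st.mem_fe hu₂)⟩ (st.hf u₂.1 hu₂))).trans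
              (reach_single (S := T \ {ε u.1, fe u.1})
                ⟨hε1 _ hu₂, hnotmem _ (hεmem u₂.1 hu₂)⟩ (hε2 u₂.1 hu₂))
          rw [Gd_ends_inr] at hends''
          rcases Sym2.eq_iff.mp hends'' with ⟨rfl, rfl⟩ | ⟨rfl, rfl⟩
          · exact hr
          · exact reach_symm hr
      have hmain := reach_map Subtype.val hproj hreach
      have hr2 : G.Reachable (T \ {ε u.1, fe u.1}) (wf u.1) v := by
        rcases Sym2.eq_iff.mp hab with ⟨rfl, rfl⟩ | ⟨rfl, rfl⟩
        · exact hmain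
        · exact reach_symm hmain
      have hsub : (T \ {ε u.1, fe u.1} : Set E) ⊆ T \ {fe u.1} :=
        Set.diff_subset_diff_right (by simp)
      have hfinal : G.Reachable (T \ {fe u.1}) u.1 (wf u.1) :=
        (reach_single (S := T \ {fe u.1}) (e := ε u.1) ⟨hε1 _ hu, by simpa using hεf u.1 hu⟩
          (hε2 u.1 hu)).trans (reach_symm (reach_mono hsub hr2))
      exact hT.2 (fe u.1) hfT u.1 (wf u.1) (st.hf u.1 hu) hfinal

lemma split_parallel {T1 T2 : Set E} (hdtd : G.IsDTD T1 T2) {a b : E} (hab : a ≠ b)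
    (hends : G.ends a = G.ends b) : (a ∈ T1 ∧ b ∈ T2) ∨ (a ∈ T2 ∧ b ∈ T1) := by
  obtain ⟨huniv, hdisj, h1, h2⟩ := hdtd
  have haT : a ∈ T1 ∨ a ∈ T2 := by
    have := Set.mem_univ a; rw [← huniv] at this; exact this
  have hbT : b ∈ T1 ∨ b ∈ T2 := by
    have := Set.mem_univ b; rw [← huniv] at this; exact this
  rcases haT with ha | ha <;> rcases hbT with hb | hb
  · exact absurd (not_parallel h1.2 ha hb hab hends) (fun h => h)
  · exact Or.inl ⟨ha, hb⟩
  · exact Or.inr ⟨ha, hb⟩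
  · exact absurd (not_parallel h2.2 ha hb hab hends) (fun h => h)

lemma dtd_down (st : G.Setup U v p1 p2 fe wf) {T1 T2 : Set E} (hdtd : G.IsDTD T1 T2) :
    (Gd st).IsDTD (down G fe T1) (down G fe T2) := by
  classical
  have hsplit := fun (u : V) (hu : u ∈ U) =>
    split_parallel hdtd (st.h12 u hu) ((st.h1 u hu).trans (st.h2 u hu).symm)
  obtain ⟨huniv, hdisj, h1, h2⟩ := hdtd
  have hmemTT : ∀ x : E, x ∈ T1 ∨ x ∈ T2 := by
    intro x; have := Set.mem_univ x; rw [← huniv] at this; exact this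
  refine ⟨?_, ?_, ?_, ?_⟩
  · ext h
    simp only [Set.mem_union, Set.mem_univ, iff_true]
    obtain e | u := h
    · rcases hmemTT e.1 with hh | hh
      · exact Or.inl ((down_inl _).mpr hh)
      · exact Or.inr ((down_inl _).mpr hh)
    · rcases hmemTT (fe u.1) with hh | hh
      · exact Or.inl ((down_inr _).mpr hh)
      · exact Or.inr ((down_inr _).mpr hh)
  · rw [Set.disjoint_left]
    rintro (e | u) hm1 hm2
    · exact Set.disjoint_left.mp hdisj hm1 hm2
    · exact Set.disjoint_left.mp hdisj hm1 hm2
  · refine tree_down st T1 h1 (fun u => if p1 u ∈ T1 then p1 u else p2 u) ?_ ?_ ?_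
    · intro u hu
      by_cases hh : p1 u ∈ T1
      · simp only [if_pos hh]; exact hh
      · simp only [if_neg hh]
        rcases hsplit u hu with ⟨ha, -⟩ | ⟨-, hb⟩
        · exact absurd ha hh
        · exact hb
    · intro u hu
      by_cases hh : p1 u ∈ T1
      · simp only [if_pos hh]; exact st.h1 u hu
      · simp only [if_neg hh]; exact st.h2 u hu
    · intro u hu h hhT hm
      rcases st.hinc u hu h hm with rfl | rfl | rfl
      · left; simp only [if_pos hhT]
      · left
        have hn1 : p1 u ∉ T1 := fun hq =>
          not_parallel h1.2 hq hhT (st.h12 u hu) ((st.h1 u hu).trans (st.h2 u hu).symm)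
        simp only [if_neg hn1]
      · right; rfl
  · refine tree_down st T2 h2 (fun u => if p1 u ∈ T2 then p1 u else p2 u) ?_ ?_ ?_
    · intro u hu
      by_cases hh : p1 u ∈ T2
      · simp only [if_pos hh]; exact hh
      · simp only [if_neg hh]
        rcases hsplit u hu with ⟨-, hb⟩ | ⟨ha, -⟩
        · exact hb
        · exact absurd ha hh
    · intro u hu
      by_cases hh : p1 u ∈ T2
      · simp only [if_pos hh]; exact st.h1 u hu
      · simp only [if_neg hh]; exact st.h2 u hu
    · intro u hu h hhT hm
      rcases st.hinc u hu h hm with rfl | rfl | rfl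
      · left; simp only [if_pos hhT]
      · left
        have hn1 : p1 u ∉ T2 := fun hq =>
          not_parallel h2.2 hq hhT (st.h12 u hu) ((st.h1 u hu).trans (st.h2 u hu).symm)
        simp only [if_neg hn1]
      · right; rfl

variable (G p1 p2 fe) in
/-- Lift a set of edges of the reduced graph to a set of edges of `G`. -/
def up (A : Set (dEdge G U)) : Set E :=
  {h | (∃ hp : ∀ u ∈ U, u ∉ G.ends h, Sum.inl ⟨h, hp⟩ ∈ A) ∨
    ∃ u, ∃ hu : u ∈ U, ((h = fe u ∨ h = p1 u) ∧ Sum.inr ⟨u, hu⟩ ∈ A) ∨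
      (h = p2 u ∧ Sum.inr ⟨u, hu⟩ ∉ A)}

lemma up_mem_old (st : G.Setup U v p1 p2 fe wf) {h : E} (hp : ∀ u ∈ U, u ∉ G.ends h)
    {A : Set (dEdge G U)} : h ∈ up G p1 p2 fe A ↔ Sum.inl ⟨h, hp⟩ ∈ A := by
  constructor
  · rintro (⟨hp', hA⟩ | ⟨u, hu, ⟨hcase, -⟩ | ⟨hcase, -⟩⟩)
    · exact hA
    · rcases hcase with rfl | rfl
      · exact absurd (st.mem_fe hu) (hp u hu)
      · exact absurd (st.mem_p1 hu) (hp u hu)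
    · exact absurd (st.mem_p2 hu) (hcase ▸ hp u hu)
  · intro hA
    exact Or.inl ⟨hp, hA⟩

lemma up_mem_fe (st : G.Setup U v p1 p2 fe wf) {u : V} (hu : u ∈ U)
    {A : Set (dEdge G U)} : fe u ∈ up G p1 p2 fe A ↔ Sum.inr ⟨u, hu⟩ ∈ A := by
  constructor
  · rintro (⟨hp', -⟩ | ⟨u', hu', ⟨hcase, hA⟩ | ⟨hcase, hA⟩⟩)
    · exact absurd (st.mem_fe hu) (hp' u hu)
    · have huu : u = u' := by
        rcases hcase with hq | hq
        · exact st.owner hu hu' (st.mem_fe hu) (hq ▸ st.mem_fe hu')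
        · exact st.owner hu hu' (st.mem_fe hu) (hq ▸ st.mem_p1 hu')
      subst huu
      exact hA
    · have huu : u = u' := st.owner hu hu' (st.mem_fe hu) (hcase ▸ st.mem_p2 hu')
      subst huu
      exact absurd hcase (st.fe_ne_p2 hu)
  · intro hA
    exact Or.inr ⟨u, hu, Or.inl ⟨Or.inl rfl, hA⟩⟩

lemma up_mem_p1 (st : G.Setup U v p1 p2 fe wf) {u : V} (hu : u ∈ U)
    {A : Set (dEdge G U)} : p1 u ∈ up G p1 p2 fe A ↔ Sum.inr ⟨u, hu⟩ ∈ A := by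
  constructor
  · rintro (⟨hp', -⟩ | ⟨u', hu', ⟨hcase, hA⟩ | ⟨hcase, hA⟩⟩)
    · exact absurd (st.mem_p1 hu) (hp' u hu)
    · have huu : u = u' := by
        rcases hcase with hq | hq
        · exact st.owner hu hu' (st.mem_p1 hu) (hq ▸ st.mem_fe hu')
        · exact st.owner hu hu' (st.mem_p1 hu) (hq ▸ st.mem_p1 hu')
      subst huu
      rcases hcase with hq | hq
      · exact absurd hq.symm (st.fe_ne_p1 hu)
      · exact hA
    · have huu : u = u' := st.owner hu hu' (st.mem_p1 hu) (hcase ▸ st.mem_p2 hu')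
      subst huu
      exact absurd hcase (st.h12 u hu)
  · intro hA
    exact Or.inr ⟨u, hu, Or.inl ⟨Or.inr rfl, hA⟩⟩

lemma up_mem_p2 (st : G.Setup U v p1 p2 fe wf) {u : V} (hu : u ∈ U)
    {A : Set (dEdge G U)} : p2 u ∈ up G p1 p2 fe A ↔ Sum.inr ⟨u, hu⟩ ∉ A := by
  constructor
  · rintro (⟨hp', -⟩ | ⟨u', hu', ⟨hcase, hA⟩ | ⟨hcase, hA⟩⟩)
    · exact absurd (st.mem_p2 hu) (hp' u hu)
    · have huu : u = u' := by
        rcases hcase with hq | hq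
        · exact st.owner hu hu' (st.mem_p2 hu) (hq ▸ st.mem_fe hu')
        · exact st.owner hu hu' (st.mem_p2 hu) (hq ▸ st.mem_p1 hu')
      subst huu
      rcases hcase with hq | hq
      · exact absurd hq.symm (st.fe_ne_p2 hu)
      · exact absurd hq.symm (st.h12 u hu)
    · have huu : u = u' := st.owner hu hu' (st.mem_p2 hu) (hcase ▸ st.mem_p2 hu')
      subst huu
      exact hA
  · intro hA
    exact Or.inr ⟨u, hu, Or.inr ⟨rfl, hA⟩⟩

lemma edge_cases (st : G.Setup U v p1 p2 fe wf) (h : E) :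
    (∀ u ∈ U, u ∉ G.ends h) ∨ ∃ u ∈ U, h = p1 u ∨ h = p2 u ∨ h = fe u := by
  by_cases hh : ∃ u ∈ U, u ∈ G.ends h
  · obtain ⟨u, hu, hm⟩ := hh
    exact Or.inr ⟨u, hu, st.hinc u hu h hm⟩
  · push_neg at hh
    exact Or.inl hh

open scoped Classical in
noncomputable def rhoU (st : G.Setup U v p1 p2 fe wf) (A : Set (dEdge G U)) : V → dVert U :=
  fun x => if hx : x ∈ U then
    (if Sum.inr ⟨x, hx⟩ ∈ A then ⟨wf x, st.hwU x hx⟩ else ⟨v, st.hvU⟩) else ⟨x, hx⟩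

lemma rhoU_not (st : G.Setup U v p1 p2 fe wf) (A : Set (dEdge G U)) {x : V} (hx : x ∉ U) :
    rhoU st A x = ⟨x, hx⟩ := dif_neg hx

lemma rhoU_pos (st : G.Setup U v p1 p2 fe wf) (A : Set (dEdge G U)) {x : V} (hx : x ∈ U)
    (hiA : Sum.inr ⟨x, hx⟩ ∈ A) : rhoU st A x = ⟨wf x, st.hwU x hx⟩ := by
  simp only [rhoU]; rw [dif_pos hx, if_pos hiA]

lemma rhoU_neg (st : G.Setup U v p1 p2 fe wf) (A : Set (dEdge G U)) {x : V} (hx : x ∈ U)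
    (hiA : Sum.inr ⟨x, hx⟩ ∉ A) : rhoU st A x = ⟨v, st.hvU⟩ := by
  simp only [rhoU]; rw [dif_pos hx, if_neg hiA]

lemma tree_up (st : G.Setup U v p1 p2 fe wf) {A : Set (dEdge G U)}
    (hA : (Gd st).IsSpanningTree A) : G.IsSpanningTree (up G p1 p2 fe A) := by
  classical
  have hstepdown : ∀ (x y : dVert U), (Gd st).Adj A x y →
      G.Reachable (up G p1 p2 fe A) x.1 y.1 := by
    intro x y hadj
    obtain ⟨h'', hm, hends⟩ := hadj
    obtain e | u := h''
    · exact reach_single ((up_mem_old st e.2).mpr hm) (Gd_ends_inl_inv st e hends)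
    · have hu := u.2
      have hfA : fe u.1 ∈ up G p1 p2 fe A := (up_mem_fe st hu).mpr hm
      have hp1A : p1 u.1 ∈ up G p1 p2 fe A := (up_mem_p1 st hu).mpr hm
      have hr : G.Reachable (up G p1 p2 fe A) (wf u.1) v :=
        (reach_symm (reach_single hfA (st.hf u.1 hu))).trans
          (reach_single hp1A (st.h1 u.1 hu))
      rw [Gd_ends_inr] at hends
      rcases Sym2.eq_iff.mp hends with ⟨rfl, rfl⟩ | ⟨rfl, rfl⟩
      · exact hr
      · exact reach_symm hr
  have hreachv : ∀ x : V, G.Reachable (up G p1 p2 fe A) x v := by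
    intro x
    by_cases hx : x ∈ U
    · by_cases hiA : Sum.inr ⟨x, hx⟩ ∈ A
      · exact reach_single ((up_mem_p1 st hx).mpr hiA) (st.h1 x hx)
      · exact reach_single ((up_mem_p2 st hx).mpr hiA) (st.h2 x hx)
    · exact reach_map Subtype.val hstepdown (hA.1 ⟨x, hx⟩ ⟨v, st.hvU⟩)
  constructor
  · intro a b
    exact (hreachv a).trans (reach_symm (hreachv b))
  · rintro h hmem a b hab hreach
    rcases edge_cases st h with hp | ⟨u, hu, hcase⟩
    · -- h is an old edge, not incident to `U`
      have hiA : Sum.inl ⟨h, hp⟩ ∈ A := (up_mem_old st hp).mp hmem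
      have haU : a ∉ U := fun ha => hp a ha (hab ▸ Sym2.mem_mk_left _ _)
      have hbU : b ∉ U := fun hb => hp b hb (hab ▸ Sym2.mem_mk_right _ _)
      have hproj : ∀ x y : V, G.Adj (up G p1 p2 fe A \ {h}) x y →
          (Gd st).Reachable (A \ {Sum.inl ⟨h, hp⟩}) (rhoU st A x) (rhoU st A y) := by
        intro x y hadj
        obtain ⟨h₂, hm2', hends2⟩ := hadj
        obtain ⟨hm2, hne2⟩ := hm2'
        have hne2' : h₂ ≠ h := fun hq => hne2 (Set.mem_singleton_iff.mpr hq)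
        rcases edge_cases st h₂ with hp₂ | ⟨u₂, hu₂, hcase₂⟩
        · have hxU : x ∉ U := fun hq => hp₂ x hq (hends2 ▸ Sym2.mem_mk_left _ _)
          have hyU : y ∉ U := fun hq => hp₂ y hq (hends2 ▸ Sym2.mem_mk_right _ _)
          rw [rhoU_not st A hxU, rhoU_not st A hyU]
          refine reach_single (e := Sum.inl ⟨h₂, hp₂⟩)
            ⟨(up_mem_old st hp₂).mp hm2, fun hq => hne2' ?_⟩
            (Gd_ends_inl st _ hends2 hxU hyU)
          exact congrArg Subtype.val (Sum.inl.inj (Set.mem_singleton_iff.mp hq))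
        · rcases hcase₂ with rfl | rfl | rfl
          · have hiA₂ : Sum.inr ⟨u₂, hu₂⟩ ∈ A := (up_mem_p1 st hu₂).mp hm2
            have heq : s(u₂, v) = s(x, y) := by rw [← st.h1 u₂ hu₂, hends2]
            have hstep : (Gd st).Reachable (A \ {Sum.inl ⟨h, hp⟩})
                (rhoU st A u₂) (rhoU st A v) := by
              rw [rhoU_pos st A hu₂ hiA₂, rhoU_not st A st.hvU]
              exact reach_single (e := Sum.inr ⟨u₂, hu₂⟩)
                ⟨hiA₂, fun hq => Sum.inr_ne_inl (Set.mem_singleton_iff.mp hq)⟩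
                (Gd_ends_inr st _)
            rcases Sym2.eq_iff.mp heq with ⟨rfl, rfl⟩ | ⟨rfl, rfl⟩
            · exact hstep
            · exact reach_symm hstep
          · have hiA₂ := (up_mem_p2 st hu₂).mp hm2
            have heq : s(u₂, v) = s(x, y) := by rw [← st.h2 u₂ hu₂, hends2]
            have hstep : (Gd st).Reachable (A \ {Sum.inl ⟨h, hp⟩})
                (rhoU st A u₂) (rhoU st A v) := by
              rw [rhoU_neg st A hu₂ hiA₂, rhoU_not st A st.hvU]; exact Relation.ReflTransGen.refl
            rcases Sym2.eq_iff.mp heq with ⟨rfl, rfl⟩ | ⟨rfl, rfl⟩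
            · exact hstep
            · exact reach_symm hstep
          · have hiA₂ := (up_mem_fe st hu₂).mp hm2
            have heq : s(u₂, wf u₂) = s(x, y) := by rw [← st.hf u₂ hu₂, hends2]
            have hstep : (Gd st).Reachable (A \ {Sum.inl ⟨h, hp⟩})
                (rhoU st A u₂) (rhoU st A (wf u₂)) := by
              rw [rhoU_pos st A hu₂ hiA₂, rhoU_not st A (st.hwU u₂ hu₂)]; exact Relation.ReflTransGen.refl
            rcases Sym2.eq_iff.mp heq with ⟨rfl, rfl⟩ | ⟨rfl, rfl⟩
            · exact hstep
            · exact reach_symm hstep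
      have hmain := reach_map (rhoU st A) hproj hreach
      rw [rhoU_not st A haU, rhoU_not st A hbU] at hmain
      exact hA.2 (Sum.inl ⟨h, hp⟩) hiA ⟨a, haU⟩ ⟨b, hbU⟩ (Gd_ends_inl st _ hab haU hbU) hmain
    · rcases hcase with rfl | rfl | rfl
      · -- h = p1 u
        have hiA : Sum.inr ⟨u, hu⟩ ∈ A := (up_mem_p1 st hu).mp hmem
        have hr : G.Reachable (up G p1 p2 fe A \ {p1 u}) u v := by
          have heq : s(u, v) = s(a, b) := by rw [← st.h1 u hu, hab]
          rcases Sym2.eq_iff.mp heq with ⟨rfl, rfl⟩ | ⟨rfl, rfl⟩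
          · exact hreach
          · exact reach_symm hreach
        have hproj : ∀ x y : V, G.Adj (up G p1 p2 fe A \ {p1 u}) x y →
            (Gd st).Reachable (A \ {Sum.inr ⟨u, hu⟩}) (rhoU st A x) (rhoU st A y) := by
          intro x y hadj
          obtain ⟨h₂, hm2', hends2⟩ := hadj
          obtain ⟨hm2, hne2⟩ := hm2'
          have hne2' : h₂ ≠ p1 u := fun hq => hne2 (Set.mem_singleton_iff.mpr hq)
          rcases edge_cases st h₂ with hp₂ | ⟨u₂, hu₂, hcase₂⟩
          · have hxU : x ∉ U := fun hq => hp₂ x hq (hends2 ▸ Sym2.mem_mk_left _ _)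
            have hyU : y ∉ U := fun hq => hp₂ y hq (hends2 ▸ Sym2.mem_mk_right _ _)
            rw [rhoU_not st A hxU, rhoU_not st A hyU]
            exact reach_single (e := Sum.inl ⟨h₂, hp₂⟩)
              ⟨(up_mem_old st hp₂).mp hm2,
                fun hq => Sum.inl_ne_inr (Set.mem_singleton_iff.mp hq)⟩
              (Gd_ends_inl st _ hends2 hxU hyU)
          · rcases hcase₂ with rfl | rfl | rfl
            · have hneu : u₂ ≠ u := fun hq => hne2' (by rw [hq])
              have hiA₂ : Sum.inr ⟨u₂, hu₂⟩ ∈ A := (up_mem_p1 st hu₂).mp hm2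
              have heq : s(u₂, v) = s(x, y) := by rw [← st.h1 u₂ hu₂, hends2]
              have hstep : (Gd st).Reachable (A \ {Sum.inr ⟨u, hu⟩})
                  (rhoU st A u₂) (rhoU st A v) := by
                rw [rhoU_pos st A hu₂ hiA₂, rhoU_not st A st.hvU]
                refine reach_single (e := Sum.inr ⟨u₂, hu₂⟩) ⟨hiA₂, fun hq => hneu ?_⟩
                  (Gd_ends_inr st _)
                exact congrArg Subtype.val (Sum.inr.inj (Set.mem_singleton_iff.mp hq))
              rcases Sym2.eq_iff.mp heq with ⟨rfl, rfl⟩ | ⟨rfl, rfl⟩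
              · exact hstep
              · exact reach_symm hstep
            · have hiA₂ := (up_mem_p2 st hu₂).mp hm2
              have heq : s(u₂, v) = s(x, y) := by rw [← st.h2 u₂ hu₂, hends2]
              have hstep : (Gd st).Reachable (A \ {Sum.inr ⟨u, hu⟩})
                  (rhoU st A u₂) (rhoU st A v) := by
                rw [rhoU_neg st A hu₂ hiA₂, rhoU_not st A st.hvU]; exact Relation.ReflTransGen.refl
              rcases Sym2.eq_iff.mp heq with ⟨rfl, rfl⟩ | ⟨rfl, rfl⟩
              · exact hstep
              · exact reach_symm hstep
            · have hiA₂ := (up_mem_fe st hu₂).mp hm2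
              have heq : s(u₂, wf u₂) = s(x, y) := by rw [← st.hf u₂ hu₂, hends2]
              have hstep : (Gd st).Reachable (A \ {Sum.inr ⟨u, hu⟩})
                  (rhoU st A u₂) (rhoU st A (wf u₂)) := by
                rw [rhoU_pos st A hu₂ hiA₂, rhoU_not st A (st.hwU u₂ hu₂)]; exact Relation.ReflTransGen.refl
              rcases Sym2.eq_iff.mp heq with ⟨rfl, rfl⟩ | ⟨rfl, rfl⟩
              · exact hstep
              · exact reach_symm hstep
        have hmain := reach_map (rhoU st A) hproj hr
        rw [rhoU_pos st A hu hiA, rhoU_not st A st.hvU] at hmain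
        exact hA.2 (Sum.inr ⟨u, hu⟩) hiA _ _ (Gd_ends_inr st _) hmain
      · -- h = p2 u
        have hiA : Sum.inr ⟨u, hu⟩ ∉ A := (up_mem_p2 st hu).mp hmem
        have hr : G.Reachable (up G p1 p2 fe A \ {p2 u}) u v := by
          have heq : s(u, v) = s(a, b) := by rw [← st.h2 u hu, hab]
          rcases Sym2.eq_iff.mp heq with ⟨rfl, rfl⟩ | ⟨rfl, rfl⟩
          · exact hreach
          · exact reach_symm hreach
        have hnoinc : ∀ e ∈ up G p1 p2 fe A \ {p2 u}, u ∉ G.ends e := by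
          rintro e ⟨he, hne⟩ hm
          rcases st.hinc u hu e hm with rfl | rfl | rfl
          · exact hiA ((up_mem_p1 st hu).mp he)
          · exact hne rfl
          · exact hiA ((up_mem_fe st hu).mp he)
        exact st.uv hu (eq_of_reach_no_inc hr hnoinc)
      · -- h = fe u
        have hiA : Sum.inr ⟨u, hu⟩ ∈ A := (up_mem_fe st hu).mp hmem
        have hr : G.Reachable (up G p1 p2 fe A \ {fe u}) u (wf u) := by
          have heq : s(u, wf u) = s(a, b) := by rw [← st.hf u hu, hab]
          rcases Sym2.eq_iff.mp heq with ⟨rfl, rfl⟩ | ⟨rfl, rfl⟩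
          · exact hreach
          · exact reach_symm hreach
        have hvu : v ≠ u := fun hq => st.uv hu hq.symm
        have hproj : ∀ x y : V, G.Adj (up G p1 p2 fe A \ {fe u}) x y →
            (Gd st).Reachable (A \ {Sum.inr ⟨u, hu⟩})
              (if x = u then ⟨v, st.hvU⟩ else rhoU st A x)
              (if y = u then ⟨v, st.hvU⟩ else rhoU st A y) := by
          intro x y hadj
          obtain ⟨h₂, hm2', hends2⟩ := hadj
          obtain ⟨hm2, hne2⟩ := hm2'
          have hne2' : h₂ ≠ fe u := fun hq => hne2 (Set.mem_singleton_iff.mpr hq)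
          rcases edge_cases st h₂ with hp₂ | ⟨u₂, hu₂, hcase₂⟩
          · have hxU : x ∉ U := fun hq => hp₂ x hq (hends2 ▸ Sym2.mem_mk_left _ _)
            have hyU : y ∉ U := fun hq => hp₂ y hq (hends2 ▸ Sym2.mem_mk_right _ _)
            rw [if_neg (fun hq : x = u => hxU (hq ▸ hu)), if_neg (fun hq : y = u => hyU (hq ▸ hu)),
              rhoU_not st A hxU, rhoU_not st A hyU]
            exact reach_single (e := Sum.inl ⟨h₂, hp₂⟩)
              ⟨(up_mem_old st hp₂).mp hm2,
                fun hq => Sum.inl_ne_inr (Set.mem_singleton_iff.mp hq)⟩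
              (Gd_ends_inl st _ hends2 hxU hyU)
          · rcases hcase₂ with rfl | rfl | rfl
            · have hiA₂ : Sum.inr ⟨u₂, hu₂⟩ ∈ A := (up_mem_p1 st hu₂).mp hm2
              have heq : s(u₂, v) = s(x, y) := by rw [← st.h1 u₂ hu₂, hends2]
              have hstep : (Gd st).Reachable (A \ {Sum.inr ⟨u, hu⟩})
                  (if u₂ = u then ⟨v, st.hvU⟩ else rhoU st A u₂)
                  (if v = u then ⟨v, st.hvU⟩ else rhoU st A v) := by
                rw [if_neg hvu, rhoU_not st A st.hvU]
                by_cases hequ : u₂ = u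
                · rw [if_pos hequ]; exact Relation.ReflTransGen.refl
                · rw [if_neg hequ, rhoU_pos st A hu₂ hiA₂]
                  refine reach_single (e := Sum.inr ⟨u₂, hu₂⟩) ⟨hiA₂, fun hq => hequ ?_⟩
                    (Gd_ends_inr st _)
                  exact congrArg Subtype.val (Sum.inr.inj (Set.mem_singleton_iff.mp hq))
              rcases Sym2.eq_iff.mp heq with ⟨rfl, rfl⟩ | ⟨rfl, rfl⟩
              · exact hstep
              · exact reach_symm hstep
            · have hiA₂ := (up_mem_p2 st hu₂).mp hm2
              have hneu : u₂ ≠ u := fun hq => hiA₂ (by subst hq; exact hiA)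
              have heq : s(u₂, v) = s(x, y) := by rw [← st.h2 u₂ hu₂, hends2]
              have hstep : (Gd st).Reachable (A \ {Sum.inr ⟨u, hu⟩})
                  (if u₂ = u then ⟨v, st.hvU⟩ else rhoU st A u₂)
                  (if v = u then ⟨v, st.hvU⟩ else rhoU st A v) := by
                rw [if_neg hvu, if_neg hneu, rhoU_neg st A hu₂ hiA₂, rhoU_not st A st.hvU]; exact Relation.ReflTransGen.refl
              rcases Sym2.eq_iff.mp heq with ⟨rfl, rfl⟩ | ⟨rfl, rfl⟩
              · exact hstep
              · exact reach_symm hstep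
            · have hneu : u₂ ≠ u := fun hq => hne2' (by rw [hq])
              have hiA₂ := (up_mem_fe st hu₂).mp hm2
              have hwne : wf u₂ ≠ u := fun hq => st.hwU u₂ hu₂ (hq.symm ▸ hu)
              have heq : s(u₂, wf u₂) = s(x, y) := by rw [← st.hf u₂ hu₂, hends2]
              have hstep : (Gd st).Reachable (A \ {Sum.inr ⟨u, hu⟩})
                  (if u₂ = u then ⟨v, st.hvU⟩ else rhoU st A u₂)
                  (if wf u₂ = u then ⟨v, st.hvU⟩ else rhoU st A (wf u₂)) := by
                rw [if_neg hneu, if_neg hwne, rhoU_pos st A hu₂ hiA₂,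
                  rhoU_not st A (st.hwU u₂ hu₂)]; exact Relation.ReflTransGen.refl
              rcases Sym2.eq_iff.mp heq with ⟨rfl, rfl⟩ | ⟨rfl, rfl⟩
              · exact hstep
              · exact reach_symm hstep
        have hmain := reach_map (fun x => if x = u then ⟨v, st.hvU⟩ else rhoU st A x)
          hproj hr
        have hwne : wf u ≠ u := fun hq => st.hwU u hu (hq.symm ▸ hu)
        have hmain' : (Gd st).Reachable (A \ {Sum.inr ⟨u, hu⟩}) ⟨v, st.hvU⟩
            ⟨wf u, st.hwU u hu⟩ := by
          have h1 : (if u = u then (⟨v, st.hvU⟩ : dVert U) else rhoU st A u) = ⟨v, st.hvU⟩ :=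
            if_pos rfl
          have h2 : (if wf u = u then (⟨v, st.hvU⟩ : dVert U) else rhoU st A (wf u)) =
              ⟨wf u, st.hwU u hu⟩ := by rw [if_neg hwne, rhoU_not st A (st.hwU u hu)]
          rw [← h1, ← h2]
          exact hmain
        exact hA.2 (Sum.inr ⟨u, hu⟩) hiA _ _ (Gd_ends_inr st _) (reach_symm hmain')

lemma dtd_up (st : G.Setup U v p1 p2 fe wf) {A B : Set (dEdge G U)}
    (h : (Gd st).IsDTD A B) : G.IsDTD (up G p1 p2 fe A) (up G p1 p2 fe B) := by
  obtain ⟨huniv, hdisj, h1, h2⟩ := h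
  have hmemAB : ∀ x : dEdge G U, x ∈ A ∨ x ∈ B := fun x => by
    have := Set.mem_univ x; rw [← huniv] at this; exact this
  refine ⟨?_, ?_, tree_up st h1, tree_up st h2⟩
  · ext h
    simp only [Set.mem_union, Set.mem_univ, iff_true]
    rcases edge_cases st h with hp | ⟨u, hu, hcase⟩
    · rcases hmemAB (Sum.inl ⟨h, hp⟩) with hh | hh
      · exact Or.inl ((up_mem_old st hp).mpr hh)
      · exact Or.inr ((up_mem_old st hp).mpr hh)
    · rcases hcase with rfl | rfl | rfl
      · rcases hmemAB (Sum.inr ⟨u, hu⟩) with hh | hh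
        · exact Or.inl ((up_mem_p1 st hu).mpr hh)
        · exact Or.inr ((up_mem_p1 st hu).mpr hh)
      · rcases hmemAB (Sum.inr ⟨u, hu⟩) with hh | hh
        · exact Or.inr ((up_mem_p2 st hu).mpr (Set.disjoint_left.mp hdisj hh))
        · exact Or.inl ((up_mem_p2 st hu).mpr (fun hq => Set.disjoint_left.mp hdisj hq hh))
      · rcases hmemAB (Sum.inr ⟨u, hu⟩) with hh | hh
        · exact Or.inl ((up_mem_fe st hu).mpr hh)
        · exact Or.inr ((up_mem_fe st hu).mpr hh)
  · rw [Set.disjoint_left]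
    intro h hA hB
    rcases edge_cases st h with hp | ⟨u, hu, hcase⟩
    · exact Set.disjoint_left.mp hdisj ((up_mem_old st hp).mp hA) ((up_mem_old st hp).mp hB)
    · rcases hcase with rfl | rfl | rfl
      · exact Set.disjoint_left.mp hdisj ((up_mem_p1 st hu).mp hA) ((up_mem_p1 st hu).mp hB)
      · rcases hmemAB (Sum.inr ⟨u, hu⟩) with hh | hh
        · exact (up_mem_p2 st hu).mp hA hh
        · exact (up_mem_p2 st hu).mp hB hh
      · exact Set.disjoint_left.mp hdisj ((up_mem_fe st hu).mp hA) ((up_mem_fe st hu).mp hB)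

lemma incEdges_up_pos (st : G.Setup U v p1 p2 fe wf) {A : Set (dEdge G U)} {u : V}
    (hu : u ∈ U) (hiA : Sum.inr ⟨u, hu⟩ ∈ A) :
    G.incEdges (up G p1 p2 fe A) u = {p1 u, fe u} := by
  ext h
  simp only [Set.mem_insert_iff, Set.mem_singleton_iff]
  constructor
  · rintro ⟨hA, hm⟩
    rcases st.hinc u hu h hm with rfl | rfl | rfl
    · exact Or.inl rfl
    · exact absurd hiA ((up_mem_p2 st hu).mp hA)
    · exact Or.inr rfl
  · rintro (rfl | rfl)
    · exact ⟨(up_mem_p1 st hu).mpr hiA, st.mem_p1 hu⟩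
    · exact ⟨(up_mem_fe st hu).mpr hiA, st.mem_fe hu⟩

lemma incEdges_up_neg (st : G.Setup U v p1 p2 fe wf) {A : Set (dEdge G U)} {u : V}
    (hu : u ∈ U) (hiA : Sum.inr ⟨u, hu⟩ ∉ A) :
    G.incEdges (up G p1 p2 fe A) u = {p2 u} := by
  ext h
  simp only [Set.mem_singleton_iff]
  constructor
  · rintro ⟨hA, hm⟩
    rcases st.hinc u hu h hm with rfl | rfl | rfl
    · exact absurd ((up_mem_p1 st hu).mp hA) hiA
    · rfl
    · exact absurd ((up_mem_fe st hu).mp hA) hiA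
  · rintro rfl
    exact ⟨(up_mem_p2 st hu).mpr hiA, st.mem_p2 hu⟩

lemma up_inj (st : G.Setup U v p1 p2 fe wf) :
    Function.Injective
      (Sum.elim Subtype.val (fun u : {u : V // u ∈ U} => fe u.1) : dEdge G U → E) := by
  rintro (e | u) (e' | u') hq <;> simp only [Sum.elim_inl, Sum.elim_inr] at hq
  · exact congrArg Sum.inl (Subtype.ext hq)
  · exact absurd (hq ▸ st.mem_fe u'.2) (e.2 u'.1 u'.2)
  · exact absurd (hq ▸ st.mem_fe u.2) (e'.2 u.1 u.2)
  · have := st.owner u.2 u'.2 (st.mem_fe u.2) (hq ▸ st.mem_fe u'.2)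
    exact congrArg Sum.inr (Subtype.ext this)

lemma deg_up_mid [Finite E] (st : G.Setup U v p1 p2 fe wf) (A : Set (dEdge G U)) {x : V}
    (hx : x ∉ U) (hxv : x ≠ v) :
    G.deg (up G p1 p2 fe A) x = (Gd st).deg A ⟨x, hx⟩ := by
  have himg : G.incEdges (up G p1 p2 fe A) x =
      (Sum.elim Subtype.val (fun u : {u : V // u ∈ U} => fe u.1)) ''
        ((Gd st).incEdges A ⟨x, hx⟩) := by
    ext h
    constructor
    · rintro ⟨hA, hm⟩
      rcases edge_cases st h with hp | ⟨u, hu, hcase⟩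
      · refine ⟨Sum.inl ⟨h, hp⟩, ⟨(up_mem_old st hp).mp hA, ?_⟩, rfl⟩
        obtain ⟨y, hy⟩ := Sym2.mem_iff_exists.mp hm
        have hyU : y ∉ U := fun hq => hp y hq (hy ▸ Sym2.mem_mk_right _ _)
        rw [Gd_ends_inl st _ hy hx hyU]
        exact Sym2.mem_mk_left _ _
      · rcases hcase with rfl | rfl | rfl
        · exfalso
          rw [st.h1 u hu] at hm
          rcases Sym2.mem_iff.mp hm with rfl | rfl
          · exact hx hu
          · exact hxv rfl
        · exfalso
          rw [st.h2 u hu] at hm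
          rcases Sym2.mem_iff.mp hm with rfl | rfl
          · exact hx hu
          · exact hxv rfl
        · rw [st.hf u hu] at hm
          rcases Sym2.mem_iff.mp hm with rfl | hq
          · exact absurd hu hx
          · refine ⟨Sum.inr ⟨u, hu⟩, ⟨(up_mem_fe st hu).mp hA, ?_⟩, rfl⟩
            rw [Gd_ends_inr st]
            exact Sym2.mem_iff.mpr (Or.inl (Subtype.ext hq.symm).symm)
    · rintro ⟨h', ⟨hA', hm'⟩, rfl⟩
      obtain e | u := h'
      · simp only [Sum.elim_inl]
        refine ⟨(up_mem_old st e.2).mpr hA', ?_⟩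
        obtain ⟨p, q, hpq⟩ := sym2_pair (G.ends e.1)
        have hpU : p ∉ U := fun hq => e.2 p hq (hpq ▸ Sym2.mem_mk_left _ _)
        have hqU : q ∉ U := fun hq => e.2 q hq (hpq ▸ Sym2.mem_mk_right _ _)
        rw [Gd_ends_inl st e hpq hpU hqU] at hm'
        rcases Sym2.mem_iff.mp hm' with h1 | h1
        · rw [show x = p from congrArg Subtype.val h1, hpq]
          exact Sym2.mem_mk_left _ _
        · rw [show x = q from congrArg Subtype.val h1, hpq]
          exact Sym2.mem_mk_right _ _
      · simp only [Sum.elim_inr]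
        refine ⟨(up_mem_fe st u.2).mpr hA', ?_⟩
        rw [Gd_ends_inr st] at hm'
        rcases Sym2.mem_iff.mp hm' with h1 | h1
        · rw [show x = wf u.1 from congrArg Subtype.val h1]
          exact st.wmem_fe u.2
        · exact absurd (congrArg Subtype.val h1) hxv
  rw [deg, deg, himg, Set.ncard_image_of_injective _ (up_inj st)]

open scoped Classical in
lemma deg_up_v [Finite E] (st : G.Setup U v p1 p2 fe wf) (A : Set (dEdge G U)) :
    G.deg (up G p1 p2 fe A) v =
      ({h : E | (v ∈ G.ends h ∧ ∀ u ∈ U, u ∉ G.ends h) ∧ h ∈ up G p1 p2 fe A}).ncard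
        + U.ncard := by
  classical
  set g : V → E := fun u => if hu : u ∈ U then
    (if Sum.inr ⟨u, hu⟩ ∈ A then p1 u else p2 u) else p1 u with hg
  have hginc : ∀ u ∈ U, u ∈ G.ends (g u) := by
    intro u hu
    simp only [hg]
    rw [dif_pos hu]
    by_cases hh : Sum.inr ⟨u, hu⟩ ∈ A
    · rw [if_pos hh]; exact st.mem_p1 hu
    · rw [if_neg hh]; exact st.mem_p2 hu
  have hsplit : G.incEdges (up G p1 p2 fe A) v =
      {h : E | (v ∈ G.ends h ∧ ∀ u ∈ U, u ∉ G.ends h) ∧ h ∈ up G p1 p2 fe A} ∪ g '' U := by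
    ext h
    constructor
    · rintro ⟨hA, hm⟩
      rcases edge_cases st h with hp | ⟨u, hu, hcase⟩
      · exact Or.inl ⟨⟨hm, hp⟩, hA⟩
      · right
        refine ⟨u, hu, ?_⟩
        simp only [hg]
        rw [dif_pos hu]
        rcases hcase with rfl | rfl | rfl
        · rw [if_pos ((up_mem_p1 st hu).mp hA)]
        · rw [if_neg ((up_mem_p2 st hu).mp hA)]
        · exfalso
          rw [st.hf u hu] at hm
          rcases Sym2.mem_iff.mp hm with hq | hq
          · exact st.uv hu hq.symm
          · exact st.hwv u hu hq.symm
    · rintro (⟨⟨hm, -⟩, hA⟩ | ⟨u, hu, rfl⟩)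
      · exact ⟨hA, hm⟩
      · constructor
        · simp only [hg]
          rw [dif_pos hu]
          by_cases hh : Sum.inr ⟨u, hu⟩ ∈ A
          · rw [if_pos hh]; exact (up_mem_p1 st hu).mpr hh
          · rw [if_neg hh]; exact (up_mem_p2 st hu).mpr hh
        · have := hginc u hu
          rcases st.hinc u hu _ this with hq | hq | hq <;> rw [hq]
          · rw [st.h1 u hu]; exact Sym2.mem_mk_right _ _
          · rw [st.h2 u hu]; exact Sym2.mem_mk_right _ _
          · exfalso
            have hgu : g u = p1 u ∨ g u = p2 u := by
              simp only [hg]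
              rw [dif_pos hu]
              by_cases hh : Sum.inr ⟨u, hu⟩ ∈ A
              · rw [if_pos hh]; exact Or.inl rfl
              · rw [if_neg hh]; exact Or.inr rfl
            rcases hgu with hq' | hq'
            · rw [hq'] at hq; exact st.fe_ne_p1 hu hq.symm
            · rw [hq'] at hq; exact st.fe_ne_p2 hu hq.symm
  have hdisj : Disjoint
      {h : E | (v ∈ G.ends h ∧ ∀ u ∈ U, u ∉ G.ends h) ∧ h ∈ up G p1 p2 fe A} (g '' U) := by
    rw [Set.disjoint_left]
    rintro h ⟨⟨-, hp⟩, -⟩ ⟨u, hu, rfl⟩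
    exact hp u hu (hginc u hu)
  have hinjg : Set.InjOn g U := by
    intro u hu u' hu' hq
    exact st.owner hu hu' (hginc u hu) (hq ▸ hginc u' hu')
  rw [deg, hsplit, Set.ncard_union_eq hdisj (Set.toFinite _) (Set.toFinite _),
    Set.ncard_image_of_injOn hinjg]

lemma deg_univ_v_eq [Finite E] (st : G.Setup U v p1 p2 fe wf) :
    G.deg Set.univ v =
      ({h : E | v ∈ G.ends h ∧ ∀ u ∈ U, u ∉ G.ends h}).ncard + 2 * U.ncard := by
  classical
  have hsplit : G.incEdges Set.univ v =
      {h : E | v ∈ G.ends h ∧ ∀ u ∈ U, u ∉ G.ends h} ∪ (p1 '' U ∪ p2 '' U) := by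
    ext h
    constructor
    · rintro ⟨-, hm⟩
      rcases edge_cases st h with hp | ⟨u, hu, hcase⟩
      · exact Or.inl ⟨hm, hp⟩
      · rcases hcase with rfl | rfl | rfl
        · exact Or.inr (Or.inl ⟨u, hu, rfl⟩)
        · exact Or.inr (Or.inr ⟨u, hu, rfl⟩)
        · exfalso
          rw [st.hf u hu] at hm
          rcases Sym2.mem_iff.mp hm with hq | hq
          · exact st.uv hu hq.symm
          · exact st.hwv u hu hq.symm
    · rintro (⟨hm, -⟩ | (⟨u, hu, rfl⟩ | ⟨u, hu, rfl⟩))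
      · exact ⟨Set.mem_univ _, hm⟩
      · exact ⟨Set.mem_univ _, by rw [st.h1 u hu]; exact Sym2.mem_mk_right _ _⟩
      · exact ⟨Set.mem_univ _, by rw [st.h2 u hu]; exact Sym2.mem_mk_right _ _⟩
  have hd1 : Disjoint {h : E | v ∈ G.ends h ∧ ∀ u ∈ U, u ∉ G.ends h} (p1 '' U ∪ p2 '' U) := by
    rw [Set.disjoint_left]
    rintro h ⟨-, hp⟩ (⟨u, hu, rfl⟩ | ⟨u, hu, rfl⟩)
    · exact hp u hu (st.mem_p1 hu)
    · exact hp u hu (st.mem_p2 hu)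
  have hd2 : Disjoint (p1 '' U) (p2 '' U) := by
    rw [Set.disjoint_left]
    rintro h ⟨u, hu, rfl⟩ ⟨u', hu', hq⟩
    have := st.owner hu hu' (st.mem_p1 hu) (hq.symm ▸ st.mem_p2 hu')
    exact st.h12 u' hu' (this ▸ hq.symm)
  have hi1 : Set.InjOn p1 U := fun u hu u' hu' hq =>
    st.owner hu hu' (st.mem_p1 hu) (hq ▸ st.mem_p1 hu')
  have hi2 : Set.InjOn p2 U := fun u hu u' hu' hq =>
    st.owner hu hu' (st.mem_p2 hu) (hq ▸ st.mem_p2 hu')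
  rw [deg, hsplit, Set.ncard_union_eq hd1 (Set.toFinite _) (Set.toFinite _),
    Set.ncard_union_eq hd2 (Set.toFinite _) (Set.toFinite _),
    Set.ncard_image_of_injOn hi1, Set.ncard_image_of_injOn hi2]
  ring

lemma balanced_up [Finite E] (st : G.Setup U v p1 p2 fe wf) {A B : Set (dEdge G U)}
    {c : ℕ} (hc : 1 ≤ c) (hdtdAB : (Gd st).IsDTD A B) (hbal : (Gd st).Balanced c A B)
    (hdeg : G.deg Set.univ v ≤ 2 * U.ncard + c) :
    G.Balanced c (up G p1 p2 fe A) (up G p1 p2 fe B) := by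
  have hup := dtd_up st hdtdAB
  have hmemAB : ∀ x : dEdge G U, x ∈ A ∨ x ∈ B := fun x => by
    have := Set.mem_univ x; rw [← hdtdAB.1] at this; exact this
  intro x
  by_cases hx : x ∈ U
  · have hnotB : ∀ hh : Sum.inr (⟨x, hx⟩ : {u : V // u ∈ U}) ∈ A,
        Sum.inr (⟨x, hx⟩ : {u : V // u ∈ U}) ∉ B :=
      fun hh => Set.disjoint_left.mp hdtdAB.2.1 hh
    rcases hmemAB (Sum.inr ⟨x, hx⟩) with hh | hh
    · have e1 : G.deg (up G p1 p2 fe A) x = 2 := by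
        rw [deg, incEdges_up_pos st hx hh]
        rw [Set.ncard_pair (fun hq => st.fe_ne_p1 hx hq.symm)]
      have e2 : G.deg (up G p1 p2 fe B) x = 1 := by
        rw [deg, incEdges_up_neg st hx (hnotB hh), Set.ncard_singleton]
      rw [e1, e2]
      push_cast
      rw [show |(1 : ℤ)| = 1 by norm_num]
      exact_mod_cast hc
    · have hnotA : Sum.inr (⟨x, hx⟩ : {u : V // u ∈ U}) ∉ A :=
        fun hq => Set.disjoint_left.mp hdtdAB.2.1 hq hh
      have e1 : G.deg (up G p1 p2 fe A) x = 1 := by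
        rw [deg, incEdges_up_neg st hx hnotA, Set.ncard_singleton]
      have e2 : G.deg (up G p1 p2 fe B) x = 2 := by
        rw [deg, incEdges_up_pos st hx hh]
        rw [Set.ncard_pair (fun hq => st.fe_ne_p1 hx hq.symm)]
      rw [e1, e2]
      push_cast
      rw [show |(-1 : ℤ)| = 1 by norm_num]
      exact_mod_cast hc
  by_cases hxv : x = v
  · subst hxv
    have h1 := deg_up_v st A
    have h2 := deg_up_v st B
    set OA := {h : E | (x ∈ G.ends h ∧ ∀ u ∈ U, u ∉ G.ends h) ∧ h ∈ up G p1 p2 fe A} with hOA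
    set OB := {h : E | (x ∈ G.ends h ∧ ∀ u ∈ U, u ∉ G.ends h) ∧ h ∈ up G p1 p2 fe B} with hOB
    have hsum : OA.ncard + OB.ncard =
        ({h : E | x ∈ G.ends h ∧ ∀ u ∈ U, u ∉ G.ends h}).ncard := by
      have hdisj : Disjoint OA OB := by
        rw [Set.disjoint_left]
        rintro h ⟨-, hA⟩ ⟨-, hB⟩
        exact Set.disjoint_left.mp hup.2.1 hA hB
      rw [← Set.ncard_union_eq hdisj (Set.toFinite _) (Set.toFinite _)]
      congr 1
      ext h
      constructor
      · rintro (⟨hh, -⟩ | ⟨hh, -⟩) <;> exact hh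
      · intro hh
        have : h ∈ up G p1 p2 fe A ∪ up G p1 p2 fe B := by
          rw [hup.1]; exact Set.mem_univ _
        rcases this with hA | hA
        · exact Or.inl ⟨hh, hA⟩
        · exact Or.inr ⟨hh, hA⟩
    have huniv := deg_univ_v_eq (v := x) st
    rw [h1, h2]
    have habs := abs_cases ((((OA.ncard + U.ncard : ℕ)) : ℤ) - ((OB.ncard + U.ncard : ℕ) : ℤ))
    rcases habs with ⟨heq, -⟩ | ⟨heq, -⟩ <;> rw [heq] <;> push_cast <;> omega
  · rw [deg_up_mid st A hx hxv, deg_up_mid st B hx hxv]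
    exact hbal ⟨x, hx⟩

end Reduction

end Multigraph

open Multigraph

/-- **Theorem (Statement 11).** In a vertex-minimal double tree `G` with no
`c`-balanced double tree decomposition (`c ≥ 2`): if `v` is adjacent to
`ℓ ≥ 1` bad 3-vertices via their double edges, then `d_G(v) ≥ 2ℓ + c + 1`. -/
theorem bad_vertices_degree_bound (c : ℕ) (hc : 2 ≤ c) (n m : ℕ)
    (G : Multigraph (Fin n) (Fin m))
    (hG : G.IsDoubleTree) (hbal : G.NoBalancedDTD c)
    (hmin : ∀ (n' m' : ℕ) (G' : Multigraph (Fin n') (Fin m')),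
      G'.IsDoubleTree → G'.NoBalancedDTD c → n ≤ n')
    (v : Fin n) (ℓ : ℕ) (hl : 1 ≤ ℓ) (U : Finset (Fin n)) (hcard : U.card = ℓ)
    (hU : ∀ u ∈ U, G.Bad3 c u ∧ G.DoubleEdge u v) :
    2 * ℓ + c + 1 ≤ G.deg Set.univ v := by
  classical
  by_contra hcon
  push_neg at hcon
  have hdeg : G.deg Set.univ v ≤ 2 * ℓ + c := by omega
  obtain ⟨T1, T2, hdtd⟩ := hG
  have hvU : v ∉ U := by
    intro hv
    obtain ⟨-, ⟨d1, d2, hne, h1, h2⟩⟩ := hU v hv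
    exact G.loopless d1 (by rw [h1]; exact Sym2.mk_isDiag_iff.mpr rfl)
  -- inhabitedness for choose!
  obtain ⟨u0, hu0⟩ : ∃ u, u ∈ U := Finset.card_pos.mp (by omega)
  haveI : Nonempty (Fin n) := ⟨v⟩
  haveI : Nonempty (Fin m) := by
    obtain ⟨-, ⟨d1, -, -, -, -⟩⟩ := hU u0 hu0
    exact ⟨d1⟩
  -- extract per-u structure
  have key : ∀ u ∈ U, ∃ (a b f0 : Fin m) (w0 : Fin n),
      G.ends a = s(u, v) ∧ G.ends b = s(u, v) ∧ a ≠ b ∧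
      G.ends f0 = s(u, w0) ∧ w0 ∉ U ∧ w0 ≠ v ∧
      (∀ h, u ∈ G.ends h → h = a ∨ h = b ∨ h = f0) := by
    intro u hu
    obtain ⟨⟨hdeg3, hsmall, hbig⟩, ⟨d1, d2, hne12, hd1, hd2⟩⟩ := hU u hu
    have huv : u ≠ v := ne_of_ends hd1
    -- the incident edge set has exactly three elements
    have hd1m : d1 ∈ G.incEdges Set.univ u :=
      ⟨Set.mem_univ _, by rw [hd1]; exact Sym2.mem_mk_left _ _⟩
    have hd2m : d2 ∈ G.incEdges Set.univ u :=
      ⟨Set.mem_univ _, by rw [hd2]; exact Sym2.mem_mk_left _ _⟩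
    have hsub : ({d1, d2} : Set (Fin m)) ⊆ G.incEdges Set.univ u := by
      rintro x (rfl | rfl)
      · exact hd1m
      · exact hd2m
    have hdeg3' : (G.incEdges Set.univ u).ncard = 3 := hdeg3
    have hdiffcard : ((G.incEdges Set.univ u) \ {d1, d2}).ncard = 1 := by
      rw [Set.ncard_diff hsub (Set.toFinite _), hdeg3', Set.ncard_pair hne12]
    obtain ⟨f0, hf0⟩ := Set.ncard_eq_one.mp hdiffcard
    have hf0mem : f0 ∈ (G.incEdges Set.univ u) \ {d1, d2} := by
      rw [hf0]; exact rfl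
    have hfeS : f0 ∈ G.incEdges Set.univ u := hf0mem.1
    have hfe_ne : f0 ∉ ({d1, d2} : Set (Fin m)) := hf0mem.2
    have hinc' : ∀ h, u ∈ G.ends h → h = d1 ∨ h = d2 ∨ h = f0 := by
      intro h hm
      by_cases hh : h ∈ ({d1, d2} : Set (Fin m))
      · rcases hh with rfl | rfl
        · exact Or.inl rfl
        · exact Or.inr (Or.inl rfl)
      · right; right
        have : h ∈ (G.incEdges Set.univ u) \ {d1, d2} := ⟨⟨Set.mem_univ _, hm⟩, hh⟩
        rw [hf0] at this
        exact this
    obtain ⟨w0, hw0, hww⟩ := exists_ends G f0 hfeS.2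
    -- the big double-edge neighbour is v itself
    obtain ⟨z, ⟨z1, z2, hz12, hz1, hz2⟩, hzbig⟩ := hbig
    have hz1u : u ∈ G.ends z1 := by rw [hz1]; exact Sym2.mem_mk_left _ _
    have hz2u : u ∈ G.ends z2 := by rw [hz2]; exact Sym2.mem_mk_left _ _
    have hzv : z = v := by
      have hzd : G.ends d1 = s(u, z) ∨ G.ends d2 = s(u, z) := by
        rcases hinc' z1 hz1u with rfl | rfl | rfl
        · exact Or.inl hz1
        · exact Or.inr hz1
        · rcases hinc' z2 hz2u with rfl | rfl | rfl
          · exact Or.inl hz2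
          · exact Or.inr hz2
          · exact absurd rfl hz12
      rcases hzd with hq | hq
      · exact (Sym2.congr_right.mp (hd1.symm.trans hq)).symm
      · exact (Sym2.congr_right.mp (hd2.symm.trans hq)).symm
    rw [hzv] at hzbig
    obtain ⟨w', ⟨h', -, hh'⟩, hw'small⟩ := hsmall
    have hw'cases : w' = v ∨ w' = w0 := by
      have hum : u ∈ G.ends h' := by rw [hh']; exact Sym2.mem_mk_left _ _
      rcases hinc' h' hum with rfl | rfl | rfl
      · exact Or.inl (Sym2.congr_right.mp (hd1.symm.trans hh')).symm
      · exact Or.inl (Sym2.congr_right.mp (hd2.symm.trans hh')).symm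
      · exact Or.inr (Sym2.congr_right.mp (hw0.symm.trans hh')).symm
    have hw0v : w0 ≠ v := by
      intro hq
      rcases hw'cases with rfl | rfl
      · exact absurd hzbig (not_lt.mpr hw'small)
      · rw [hq] at hw'small
        exact absurd hzbig (not_lt.mpr hw'small)
    have hw0U : w0 ∉ U := by
      intro hq
      obtain ⟨-, ⟨g1, g2, hg12, hgd1, hgd2⟩⟩ := hU w0 hq
      have hgf : ∀ gx : Fin m, G.ends gx = s(w0, v) → gx ≠ f0 := by
        intro gx hgx hqq
        rw [hqq, hw0] at hgx
        rcases Sym2.eq_iff.mp hgx with ⟨hq1, hq2⟩ | ⟨hq1, hq2⟩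
        · exact hww hq1
        · exact huv hq1
      have hs1 := split_parallel hdtd hne12 (hd1.trans hd2.symm)
      have hs2 := split_parallel hdtd hg12 (hgd1.trans hgd2.symm)
      have hfeT : f0 ∈ T1 ∨ f0 ∈ T2 := by
        have := Set.mem_univ f0
        rw [← hdtd.1] at this
        exact this
      have hd1f : d1 ≠ f0 := fun hqq => hfe_ne (Set.mem_insert_iff.mpr (Or.inl hqq.symm))
      have hd2f : d2 ≠ f0 := fun hqq =>
        hfe_ne (Set.mem_insert_iff.mpr (Or.inr (Set.mem_singleton_iff.mpr hqq.symm)))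
      have haux : ∀ (T : Set (Fin m)), G.IsSpanningTree T → f0 ∈ T →
          ∀ εd : Fin m, G.ends εd = s(u, v) → εd ∈ T → εd ≠ f0 →
          ∀ εg : Fin m, G.ends εg = s(w0, v) → εg ∈ T → εg ≠ f0 → False := by
        intro T hT hfe εd hεd hεdT hεdne εg hεg hεgT hεgne
        apply hT.2 f0 hfe u w0 hw0
        exact (reach_single (S := T \ {f0}) (e := εd) ⟨hεdT, by simp [hεdne]⟩ hεd).trans
          (reach_symm (reach_single (S := T \ {f0}) (e := εg) ⟨hεgT, by simp [hεgne]⟩ hεg))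
      rcases hfeT with hfe | hfe
      · rcases hs1 with ⟨hdT, -⟩ | ⟨-, hdT⟩ <;> rcases hs2 with ⟨hgT, -⟩ | ⟨-, hgT⟩
        · exact haux T1 hdtd.2.2.1 hfe d1 hd1 hdT hd1f g1 hgd1 hgT (hgf g1 hgd1)
        · exact haux T1 hdtd.2.2.1 hfe d1 hd1 hdT hd1f g2 hgd2 hgT (hgf g2 hgd2)
        · exact haux T1 hdtd.2.2.1 hfe d2 hd2 hdT hd2f g1 hgd1 hgT (hgf g1 hgd1)
        · exact haux T1 hdtd.2.2.1 hfe d2 hd2 hdT hd2f g2 hgd2 hgT (hgf g2 hgd2)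
      · rcases hs1 with ⟨-, hdT⟩ | ⟨hdT, -⟩ <;> rcases hs2 with ⟨-, hgT⟩ | ⟨hgT, -⟩
        · exact haux T2 hdtd.2.2.2 hfe d2 hd2 hdT hd2f g2 hgd2 hgT (hgf g2 hgd2)
        · exact haux T2 hdtd.2.2.2 hfe d2 hd2 hdT hd2f g1 hgd1 hgT (hgf g1 hgd1)
        · exact haux T2 hdtd.2.2.2 hfe d1 hd1 hdT hd1f g2 hgd2 hgT (hgf g2 hgd2)
        · exact haux T2 hdtd.2.2.2 hfe d1 hd1 hdT hd1f g1 hgd1 hgT (hgf g1 hgd1)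
    exact ⟨d1, d2, f0, w0, hd1, hd2, hne12, hw0, hw0U, hw0v, hinc'⟩
  choose! ea eb ef ew hk1 hk2 hk3 hk4 hk5 hk6 hk7 using key
  -- build the Setup structure on the coerced set
  have st : G.Setup (↑U : Set (Fin n)) v ea eb ef ew := by
    refine ⟨?_, ?_, ?_, ?_, ?_, ?_, ?_, ?_⟩
    · intro u hu; exact hk1 u (Finset.mem_coe.mp hu)
    · intro u hu; exact hk2 u (Finset.mem_coe.mp hu)
    · intro u hu; exact hk3 u (Finset.mem_coe.mp hu)
    · intro u hu; exact hk4 u (Finset.mem_coe.mp hu)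
    · intro u hu hq; exact hk5 u (Finset.mem_coe.mp hu) (Finset.mem_coe.mp hq)
    · intro u hu; exact hk6 u (Finset.mem_coe.mp hu)
    · intro u hu; exact hk7 u (Finset.mem_coe.mp hu)
    · intro hq; exact hvU (Finset.mem_coe.mp hq)
  have hGd_dt : (Gd st).IsDoubleTree := ⟨_, _, dtd_down st hdtd⟩
  have hGd_nb : NoBalancedDTD c (Gd st) := by
    rintro ⟨A, B, hdtdAB, hbalAB⟩
    apply hbal
    refine ⟨up G ea eb ef A, up G ea eb ef B, dtd_up st hdtdAB, ?_⟩
    apply balanced_up st (by omega : 1 ≤ c) hdtdAB hbalAB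
    rw [Set.ncard_coe_finset, hcard]
    exact hdeg
  haveI : Finite (dVert (↑U : Set (Fin n))) := by unfold dVert; infer_instance
  haveI : Finite (dEdge G (↑U : Set (Fin n))) := by unfold dEdge; infer_instance
  obtain ⟨n', ⟨σ⟩⟩ := Finite.exists_equiv_fin (dVert (↑U : Set (Fin n)))
  obtain ⟨m', ⟨τ⟩⟩ := Finite.exists_equiv_fin (dEdge G (↑U : Set (Fin n)))
  have hHloop : ∀ e : Fin m', ¬ (((Gd st).ends (τ.symm e)).map σ).IsDiag := by
    intro e hdiag
    obtain ⟨p, q, hpq⟩ := sym2_pair ((Gd st).ends (τ.symm e))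
    rw [hpq, Sym2.map_pair_eq, Sym2.mk_isDiag_iff] at hdiag
    exact ne_of_ends (G := Gd st) hpq (σ.injective hdiag)
  set H : Multigraph (Fin n') (Fin m') :=
    ⟨fun e => ((Gd st).ends (τ.symm e)).map σ, hHloop⟩ with hH
  have hcomp : ∀ e, H.ends (τ e) = ((Gd st).ends e).map σ := by
    intro e
    simp only [hH, Equiv.symm_apply_apply]
  have hle := hmin n' m' H (iso_doubleTree σ τ hcomp hGd_dt)
    (iso_noBalancedDTD σ τ hcomp hGd_nb)
  -- cardinality computation
  have hn' : Nat.card (dVert (↑U : Set (Fin n))) = n' := by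
    rw [Nat.card_congr σ, Nat.card_eq_fintype_card, Fintype.card_fin]
  have hcompl : Nat.card (dVert (↑U : Set (Fin n))) =
      ((↑U : Set (Fin n))ᶜ).ncard := by
    rw [← Nat.card_coe_set_eq]
    rfl
  have hsumc : ((↑U : Set (Fin n))).ncard + ((↑U : Set (Fin n))ᶜ).ncard = Nat.card (Fin n) :=
    Set.ncard_add_ncard_compl _ (Set.toFinite _) (Set.toFinite _)
  rw [Set.ncard_coe_finset, hcard, Nat.card_eq_fintype_card, Fintype.card_fin] at hsumc
  rw [hcompl] at hn'
  omega
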